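/- Let N be a positive natural number, let Ω ⊆ ℝ^N be a measurable set of finite positive Lebesgue measure, let q, p be real numbers with 0 < q < 1 < p, and let λ > 0. Let k, h : ℝ^N → ℝ be essentially bounded on Ω with k ≥ 0 a.e. on Ω and essinf_{x∈Ω} h(x) > 0. Then there exists a real number m < 0 such that for every measurable function u : ℝ^N → ℝ with ∫_Ω |u|^{p+1} dx < ∞ one has −(λ/(q+1))·∫_Ω k·|u|^{q+1} dx + (1/(p+1))·∫_Ω h·|u|^{p+1} dx ≥ m. -/

import Mathlib

open MeasureTheory

/-- uniform lower bound for the potential part of the energy: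
there is `m < 0` with `−(λ/(q+1))∫ k|u|^{q+1} + (1/(p+1))∫ h|u|^{p+1} ≥ m`
for every measurable `u` with `∫ |u|^{p+1} < ∞`. -/
lemma aux_pt {a b q p : ℝ} (ha : 0 ≤ a) (hb : 0 < b) (hq : 0 < q + 1) (hpq : 0 < p - q)
    {t : ℝ} (ht : 0 ≤ t) :
    -(a * ((2 * a / b) ^ (p - q)⁻¹) ^ (q + 1)) ≤ -a * t ^ (q + 1) + b * t ^ (p + 1) := by
  set T : ℝ := (2 * a / b) ^ (p - q)⁻¹ with hT
  have hT0 : 0 ≤ T := Real.rpow_nonneg (by positivity) _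
  rcases le_or_gt t T with hle | hlt
  · have h1 : t ^ (q + 1) ≤ T ^ (q + 1) := Real.rpow_le_rpow ht hle hq.le
    have h2 : 0 ≤ b * t ^ (p + 1) := by positivity
    nlinarith [Real.rpow_nonneg ht (q + 1)]
  · have ht0 : 0 < t := lt_of_le_of_lt hT0 hlt
    have hTpq : T ^ (p - q) = 2 * a / b := Real.rpow_inv_rpow (by positivity) hpq.ne'
    have h3 : 2 * a / b ≤ t ^ (p - q) := by
      rw [← hTpq]; exact Real.rpow_le_rpow hT0 hlt.le hpq.le
    have h4 : t ^ (p + 1) = t ^ (q + 1) * t ^ (p - q) := by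
      rw [← Real.rpow_add ht0]; ring_nf
    have h5 : 0 ≤ t ^ (q + 1) := Real.rpow_nonneg ht0.le _
    have h6 : 0 ≤ a * T ^ (q + 1) := by positivity
    have h7 : b * (2 * a / b) = 2 * a := by field_simp
    nlinarith [mul_le_mul_of_nonneg_left h3 (mul_nonneg hb.le h5)]

theorem stmt_9 (N : ℕ) (hN : 0 < N) (Ω : Set (EuclideanSpace ℝ (Fin N)))
    (hΩ : MeasurableSet Ω) (hΩfin : volume Ω < ⊤) (hΩpos : 0 < volume Ω)
    (q p lam : ℝ) (hq0 : 0 < q) (hq1 : q < 1) (hp : 1 < p) (hlam : 0 < lam)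
    (k h : EuclideanSpace ℝ (Fin N) → ℝ)
    (hkb : MemLp k ⊤ (volume.restrict Ω)) (hhb : MemLp h ⊤ (volume.restrict Ω))
    (hk0 : ∀ᵐ x ∂(volume.restrict Ω), 0 ≤ k x)
    (hhinf : 0 < essInf h (volume.restrict Ω)) :
    ∃ m : ℝ, m < 0 ∧ ∀ u : EuclideanSpace ℝ (Fin N) → ℝ, Measurable u →
      IntegrableOn (fun x => |u x| ^ (p + 1)) Ω volume →
      -(lam / (q + 1)) * (∫ x in Ω, k x * |u x| ^ (q + 1))
          + (1 / (p + 1)) * (∫ x in Ω, h x * |u x| ^ (p + 1)) ≥ m := by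
  set μ := volume.restrict Ω with hμdef
  have hq1' : (0:ℝ) < q + 1 := by linarith
  have hp1' : (0:ℝ) < p + 1 := by linarith
  have hpq : (0:ℝ) < p - q := by linarith
  -- bound on k
  obtain ⟨Kk0, hKk0⟩ : ∃ C : ℝ, ∀ᵐ x ∂μ, ‖k x‖ ≤ C := by
    have := hkb.2
    rw [eLpNorm_exponent_top] at this
    obtain ⟨C, hC⟩ := eLpNormEssSup_lt_top_iff_isBoundedUnder.mp this
    refine ⟨C, ?_⟩
    rw [Filter.eventually_map] at hC
    filter_upwards [hC] with x hx
    exact_mod_cast hx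
  set Kk : ℝ := max Kk0 0 with hKkdef
  have hKk : ∀ᵐ x ∂μ, ‖k x‖ ≤ Kk := hKk0.mono fun x hx => hx.trans (le_max_left _ _)
  have hKknn : 0 ≤ Kk := le_max_right _ _
  -- bound below on h
  obtain ⟨Kh, hKh⟩ : ∃ C : ℝ, ∀ᵐ x ∂μ, ‖h x‖ ≤ C := by
    have := hhb.2
    rw [eLpNorm_exponent_top] at this
    obtain ⟨C, hC⟩ := eLpNormEssSup_lt_top_iff_isBoundedUnder.mp this
    refine ⟨C, ?_⟩
    rw [Filter.eventually_map] at hC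
    filter_upwards [hC] with x hx
    exact_mod_cast hx
  have hbdd : Filter.IsBoundedUnder (· ≥ ·) (ae μ) h := by
    refine ⟨-Kh, Filter.eventually_map.mpr ?_⟩
    filter_upwards [hKh] with x hx
    have := (abs_le.mp (by simpa [Real.norm_eq_abs] using hx)).1
    simpa using this
  have hhge : ∀ᵐ x ∂μ, essInf h μ ≤ h x := ae_essInf_le hbdd
  set b0 : ℝ := essInf h μ with hb0def
  set A : ℝ := lam / (q + 1) * Kk with hAdef
  set b : ℝ := b0 / (p + 1) with hbdef
  have hA : 0 ≤ A := by positivity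
  have hbpos : 0 < b := by positivity
  set C : ℝ := A * ((2 * A / b) ^ (p - q)⁻¹) ^ (q + 1) with hCdef
  have hC0 : 0 ≤ C := by positivity
  refine ⟨-(C * (volume Ω).toReal) - 1, by
    have := mul_nonneg hC0 (ENNReal.toReal_nonneg (a := volume Ω)); linarith,
    fun u hu hup => ?_⟩
  -- integrability
  have huq : IntegrableOn (fun x => |u x| ^ (q + 1)) Ω volume := by
    refine Integrable.mono' (g := fun x => 1 + |u x| ^ (p + 1))
      ((integrableOn_const hΩfin.ne).add hup)
      ((by fun_prop : Measurable fun x => |u x| ^ (q + 1)).aestronglyMeasurable) ?_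
    refine Filter.Eventually.of_forall fun x => ?_
    show ‖|u x| ^ (q + 1)‖ ≤ 1 + |u x| ^ (p + 1)
    have h1 : 0 ≤ |u x| ^ (q + 1) := Real.rpow_nonneg (abs_nonneg _) _
    rw [Real.norm_eq_abs, abs_of_nonneg h1]
    rcases le_or_gt (|u x|) 1 with hle | hlt
    · have := Real.rpow_le_one (abs_nonneg _) hle hq1'.le
      have h2 : 0 ≤ |u x| ^ (p + 1) := Real.rpow_nonneg (abs_nonneg _) _
      linarith
    · have := Real.rpow_le_rpow_of_exponent_le hlt.le (by linarith : q + 1 ≤ p + 1)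
      linarith
  have Ik : IntegrableOn (fun x => k x * |u x| ^ (q + 1)) Ω volume :=
    huq.bdd_mul hkb.aestronglyMeasurable hKk
  have Ih : IntegrableOn (fun x => h x * |u x| ^ (p + 1)) Ω volume :=
    hup.bdd_mul hhb.aestronglyMeasurable hKh
  have key : ∫ x in Ω, (-(C)) ≤
      ∫ x in Ω, (-(lam / (q + 1)) * (k x * |u x| ^ (q + 1))
        + (1 / (p + 1)) * (h x * |u x| ^ (p + 1))) := by
    refine integral_mono_ae (integrableOn_const hΩfin.ne)
      ((Ik.const_mul _).add (Ih.const_mul _)) ?_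
    filter_upwards [hKk, hk0, hhge] with x hx1 hx2 hx3
    have ht : (0:ℝ) ≤ |u x| := abs_nonneg _
    have hq' : 0 ≤ |u x| ^ (q + 1) := Real.rpow_nonneg ht _
    have hp' : 0 ≤ |u x| ^ (p + 1) := Real.rpow_nonneg ht _
    have hkx : k x ≤ Kk := le_trans (le_abs_self _) (by simpa [Real.norm_eq_abs] using hx1)
    have step1 : -A * |u x| ^ (q + 1) ≤ -(lam / (q + 1)) * (k x * |u x| ^ (q + 1)) := by
      have : k x * |u x| ^ (q + 1) ≤ Kk * |u x| ^ (q + 1) :=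
        mul_le_mul_of_nonneg_right hkx hq'
      have hl : 0 < lam / (q + 1) := by positivity
      nlinarith
    have step2 : b * |u x| ^ (p + 1) ≤ (1 / (p + 1)) * (h x * |u x| ^ (p + 1)) := by
      have : b0 * |u x| ^ (p + 1) ≤ h x * |u x| ^ (p + 1) :=
        mul_le_mul_of_nonneg_right hx3 hp'
      have hl : 0 < 1 / (p + 1) := by positivity
      have hb' : b = 1 / (p + 1) * b0 := by rw [hbdef]; ring
      rw [hb', mul_assoc]
      exact mul_le_mul_of_nonneg_left this hl.le
    have := aux_pt hA hbpos hq1' hpq ht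
    show -C ≤ -(lam / (q + 1)) * (k x * |u x| ^ (q + 1))
        + (1 / (p + 1)) * (h x * |u x| ^ (p + 1))
    linarith
  have hconst : ∫ x in Ω, (-(C)) = -(C * (volume Ω).toReal) := by
    rw [setIntegral_const, smul_eq_mul, measureReal_def]; ring
  rw [hconst] at key
  have heq : -(lam / (q + 1)) * (∫ x in Ω, k x * |u x| ^ (q + 1))
      + (1 / (p + 1)) * (∫ x in Ω, h x * |u x| ^ (p + 1))
      = ∫ x in Ω, (-(lam / (q + 1)) * (k x * |u x| ^ (q + 1))
        + (1 / (p + 1)) * (h x * |u x| ^ (p + 1))) := by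
    rw [integral_add (Ik.const_mul _) (Ih.const_mul _), integral_const_mul, integral_const_mul]
  rw [ge_iff_le, heq]
  linarith
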